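/- For all n ≥ 1 and k ≥ 1, R_n^(k) = {P ∪ (P·g)↑ : P ∈ R_n^(k−1), g : {0,…,n−1} → {0,…,n−1}}. -/

import Mathlib

open Finset

/-- `Π·h`: the vector whose `q`-th entry is the union of the `Π p` over all `p` with `h p = q`. -/
def dotAct {n : ℕ} (Pi : Fin n → Finset ℕ) (h : Fin n → Fin n) : Fin n → Finset ℕ :=
  fun q => (Finset.univ.filter (fun p => h p = q)).biUnion Pi

/-- Entrywise union of two vectors of sets. -/
def vUnion {n : ℕ} (Pi Pi' : Fin n → Finset ℕ) : Fin n → Finset ℕ :=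
  fun q => Pi q ∪ Pi' q

/-- `r = max (π₀ ∪ … ∪ π_{n−1})`. -/
def vMax {n : ℕ} (Pi : Fin n → Finset ℕ) : ℕ :=
  (Finset.univ.sup Pi).sup id

/-- `Π↑`: add `r = max (π₀ ∪ … ∪ π_{n−1})` to every element of every entry. -/
def vUp {n : ℕ} (Pi : Fin n → Finset ℕ) : Fin n → Finset ℕ :=
  fun q => (Pi q).image (· + vMax Pi)

/-- A `k`-EXPcomposition of size `n`: pairwise disjoint entries whose union is `{1,…,2^k}`. -/
def IsEXP {n : ℕ} (k : ℕ) (Pi : Fin n → Finset ℕ) : Prop :=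
  (∀ p q : Fin n, p ≠ q → Disjoint (Pi p) (Pi q)) ∧
    Finset.univ.sup Pi = Finset.Icc 1 (2 ^ k)

/-- A `k`-Rvalid vector of size `n`. -/
def IsRvalid {n : ℕ} (k : ℕ) (ρ : Fin n → Finset ℕ) : Prop :=
  IsEXP k ρ ∧ (∀ p : Fin n, p.val = 0 → 1 ∈ ρ p) ∧
    ∀ k' < k, ∀ i ∈ Finset.Icc 1 (2 ^ k'), ∀ j ∈ Finset.Icc 1 (2 ^ k'),
      (∃ α, i ∈ ρ α ∧ j ∈ ρ α) → ∃ β, i + 2 ^ k' ∈ ρ β ∧ j + 2 ^ k' ∈ ρ β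

/-- A `k`-Lvalid vector of size `m`. -/
def IsLvalid {m : ℕ} (k : ℕ) (lam : Fin m → Finset ℕ) : Prop :=
  IsEXP k lam ∧ (∀ p : Fin m, p.val = 0 → 2 ^ k ∈ lam p) ∧
    ∀ k' < k, ∀ i ∈ Finset.Icc 1 (2 ^ k'), ∀ j ∈ Finset.Icc 1 (2 ^ k'),
      (∃ α, 2 ^ k + 1 - i ∈ lam α ∧ 2 ^ k + 1 - j ∈ lam α) →
        ∃ β, 2 ^ k + 1 - (i + 2 ^ k') ∈ lam β ∧ 2 ^ k + 1 - (j + 2 ^ k') ∈ lam β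

/-- Number of nonempty entries of a vector of sets. -/
def nne {n : ℕ} (Pi : Fin n → Finset ℕ) : ℕ :=
  (Finset.univ.filter (fun q => Pi q ≠ ∅)).card

/-- `succ(P) = {P ∪ (P·g)↑ : g}`. -/
def succSet {n : ℕ} (P : Fin n → Finset ℕ) : Finset (Fin n → Finset ℕ) :=
  (Finset.univ : Finset (Fin n → Fin n)).image (fun g => vUnion P (vUp (dotAct P g)))

/-- The graded set `U_{m,n}^{(k)}` of U-pairs. -/
def Uset (m n : ℕ) : ℕ → Set ((Fin m → Finset ℕ) × (Fin n → Finset ℕ))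
  | 0 => {x | x = (fun p => if p.val = 0 then {1} else ∅,
                   fun q => if q.val = 0 then {1} else ∅)}
  | k + 1 => {x | ∃ L P, (L, P) ∈ Uset m n k ∧ ∃ (f : Fin m → Fin m) (g : Fin n → Fin n),
      x = (vUnion (dotAct L f) (vUp L), vUnion P (vUp (dotAct P g)))}

/-- The `r`-Stirling number: partitions of `{1,…,a}` into `b` nonempty blocks
with `1,…,r` in pairwise distinct blocks. -/
noncomputable def rStirling (a b r : ℕ) : ℕ :=
  Set.ncard {C : Finset (Finset ℕ) |
    C.card = b ∧ (∅ ∉ C) ∧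
    (∀ B ∈ C, ∀ B' ∈ C, B ≠ B' → Disjoint B B') ∧
    C.sup id = Finset.Icc 1 a ∧
    ∀ x ∈ Finset.Icc 1 r, ∀ y ∈ Finset.Icc 1 r, x ≠ y →
      ∀ B ∈ C, x ∈ B → y ∉ B}

/-- The Stirling number of the second kind: the number of partitions of an
`a`-element set into `b` nonempty blocks. -/
noncomputable def stirling2 (a b : ℕ) : ℕ := rStirling a b 0

/-- The entry `s_n^{(i,j)}` (with `1 ≤ i,j ≤ n`). -/
noncomputable def sEntry (n i j : ℕ) : ℕ :=
  if i ≤ j then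
    (j - i).factorial * Nat.choose (n - i) (j - i) *
      ∑ α ∈ Finset.Icc (j - i) i, Nat.choose i α * i ^ (i - α) * stirling2 α (j - i)
  else 0

/-- The matrix `S_n`, with rows and columns indexed by `{1,…,n}`. -/
noncomputable def Smat (n : ℕ) : Matrix (Fin n) (Fin n) ℕ :=
  fun i j => sEntry n (i.val + 1) (j.val + 1)

/-- One step of the shuffle-automaton action on subsets of the grid. -/
def stepE {m n : ℕ} (E : Finset (Fin m × Fin n)) (f : Fin m → Fin m) (g : Fin n → Fin n) :
    Finset (Fin m × Fin n) :=
  E.image (fun p => (f p.1, p.2)) ∪ E.image (fun p => (p.1, g p.2))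

/-- Reachability from `{(0,0)}` by finitely many steps. -/
def Reach {m n : ℕ} (hm : 0 < m) (hn : 0 < n) (E : Finset (Fin m × Fin n)) : Prop :=
  Relation.ReflTransGen (fun E1 E2 => ∃ f g, E2 = stepE E1 f g)
    {(⟨0, hm⟩, ⟨0, hn⟩)} E

/-- Reachability from `{(0,0)}` in at most `t` steps. -/
def ReachIn {m n : ℕ} (hm : 0 < m) (hn : 0 < n) :
    ℕ → Finset (Fin m × Fin n) → Prop
  | 0, E => E = {(⟨0, hm⟩, ⟨0, hn⟩)}
  | t + 1, E => ReachIn hm hn t E ∨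
      ∃ E' f g, ReachIn hm hn t E' ∧ E = stepE E' f g

/-- `s(Λ,P) = {(i,j) : λ_i ∩ ρ_j ≠ ∅}`. -/
def sTab {m n : ℕ} (L : Fin m → Finset ℕ) (P : Fin n → Finset ℕ) :
    Finset (Fin m × Fin n) :=
  Finset.univ.filter (fun p => (L p.1 ∩ P p.2).Nonempty)

lemma mem_dotAct {n : ℕ} (Pi : Fin n → Finset ℕ) (h : Fin n → Fin n) (q : Fin n) (x : ℕ) :
    x ∈ dotAct Pi h q ↔ ∃ p, h p = q ∧ x ∈ Pi p := by
  simp [dotAct]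

lemma sup_dotAct {n : ℕ} (Pi : Fin n → Finset ℕ) (h : Fin n → Fin n) :
    Finset.univ.sup (dotAct Pi h) = Finset.univ.sup Pi := by
  ext x
  simp only [Finset.mem_sup, Finset.mem_univ, true_and, mem_dotAct]
  constructor
  · rintro ⟨q, p, -, hx⟩; exact ⟨p, hx⟩
  · rintro ⟨p, hx⟩; exact ⟨h p, p, rfl, hx⟩

lemma sup_Icc_id (N : ℕ) (hN : 1 ≤ N) : (Finset.Icc 1 N).sup id = N := by
  apply le_antisymm
  · exact Finset.sup_le fun x hx => (Finset.mem_Icc.mp hx).2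
  · exact Finset.le_sup (f := id) (Finset.mem_Icc.mpr ⟨hN, le_refl N⟩)

lemma vMax_eq {n : ℕ} (Pi : Fin n → Finset ℕ) (N : ℕ) (hN : 1 ≤ N)
    (h : Finset.univ.sup Pi = Finset.Icc 1 N) : vMax Pi = N := by
  rw [vMax, h, sup_Icc_id N hN]

theorem stmt1 (n k : ℕ) (hn : 1 ≤ n) (hk : 1 ≤ k) :
    {ρ : Fin n → Finset ℕ | IsRvalid k ρ} =
      {ρ' : Fin n → Finset ℕ | ∃ (P : Fin n → Finset ℕ) (g : Fin n → Fin n),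
        IsRvalid (k - 1) P ∧ ρ' = vUnion P (vUp (dotAct P g))} := by
  obtain ⟨k', rfl⟩ : ∃ k', k = k' + 1 := ⟨k - 1, by omega⟩
  have hsucc : k' + 1 - 1 = k' := rfl
  have hNpos : (1:ℕ) ≤ 2 ^ k' := Nat.one_le_two_pow
  have h2k : (2:ℕ) ^ (k' + 1) = 2 ^ k' + 2 ^ k' := by rw [pow_succ]; omega
  ext ρ
  simp only [Set.mem_setOf_eq, hsucc]
  constructor
  · rintro ⟨⟨hdisj, hsup⟩, hone, hcond⟩
    have ρsub : ∀ q, ρ q ⊆ Finset.Icc 1 (2 ^ (k' + 1)) := fun q =>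
      hsup ▸ Finset.le_sup (Finset.mem_univ q)
    set P : Fin n → Finset ℕ := fun q => (ρ q).filter (· ≤ 2 ^ k') with hP
    have memP : ∀ q x, x ∈ P q ↔ x ∈ ρ q ∧ x ≤ 2 ^ k' := by
      intro q x; simp [hP]
    have supP : Finset.univ.sup P = Finset.Icc 1 (2 ^ k') := by
      ext x
      simp only [Finset.mem_sup, Finset.mem_univ, true_and, memP, Finset.mem_Icc]
      constructor
      · rintro ⟨q, hq, hle⟩
        have := Finset.mem_Icc.mp (ρsub q hq)
        exact ⟨this.1, hle⟩
      · rintro ⟨h1, h2⟩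
        have hx : x ∈ Finset.univ.sup ρ := by
          rw [hsup, Finset.mem_Icc]; omega
        rw [Finset.mem_sup] at hx
        obtain ⟨q, -, hq⟩ := hx
        exact ⟨q, hq, h2⟩
    have hPsub : ∀ q, P q ⊆ Finset.Icc 1 (2 ^ k') := fun q =>
      supP ▸ Finset.le_sup (Finset.mem_univ q)
    have hex : ∀ α : Fin n, ∃ β : Fin n, ∀ i ∈ P α, i + 2 ^ k' ∈ ρ β := by
      intro α
      by_cases hPE : (P α).Nonempty
      · obtain ⟨i₀, hi₀⟩ := hPE
        have hi₀I : i₀ ∈ Finset.Icc 1 (2 ^ k') := hPsub α hi₀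
        have hρi₀ : i₀ ∈ ρ α := ((memP α i₀).mp hi₀).1
        obtain ⟨β, hβ1, -⟩ := hcond k' (Nat.lt_succ_self k') i₀ hi₀I i₀ hi₀I ⟨α, hρi₀, hρi₀⟩
        refine ⟨β, fun i hi => ?_⟩
        obtain ⟨β', h1, h2⟩ := hcond k' (Nat.lt_succ_self k') i₀ hi₀I i (hPsub α hi)
          ⟨α, hρi₀, ((memP α i).mp hi).1⟩
        have hββ : β' = β := by
          by_contra hne
          exact Finset.disjoint_left.mp (hdisj β' β hne) h1 hβ1
        rw [← hββ]; exact h2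
      · exact ⟨⟨0, by omega⟩, fun i hi => absurd ⟨i, hi⟩ hPE⟩
    choose g hg using hex
    have supD : Finset.univ.sup (dotAct P g) = Finset.Icc 1 (2 ^ k') :=
      (sup_dotAct P g).trans supP
    have vMaxD : vMax (dotAct P g) = 2 ^ k' := vMax_eq _ _ hNpos supD
    refine ⟨P, g, ⟨⟨fun p q hpq => (hdisj p q hpq).mono (Finset.filter_subset _ _)
        (Finset.filter_subset _ _), supP⟩, fun p hp => (memP p 1).mpr ⟨hone p hp, hNpos⟩,
        ?_⟩, ?_⟩
    · rintro k'' hk'' i hi j hj ⟨α, hiα, hjα⟩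
      have hpow : 2 ^ k'' + 2 ^ k'' ≤ 2 ^ k' := by
        have := Nat.pow_le_pow_right (show 1 ≤ 2 by norm_num) (show k'' + 1 ≤ k' by omega)
        rw [pow_succ] at this; omega
      have hiI := Finset.mem_Icc.mp hi
      have hjI := Finset.mem_Icc.mp hj
      obtain ⟨β, h1, h2⟩ := hcond k'' (by omega) i
        (Finset.mem_Icc.mpr ⟨hiI.1, by omega⟩) j (Finset.mem_Icc.mpr ⟨hjI.1, by omega⟩)
        ⟨α, ((memP α i).mp hiα).1, ((memP α j).mp hjα).1⟩
      exact ⟨β, (memP β _).mpr ⟨h1, by omega⟩, (memP β _).mpr ⟨h2, by omega⟩⟩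
    · funext q
      ext x
      simp only [vUnion, vUp, Finset.mem_union, Finset.mem_image, vMaxD, mem_dotAct]
      constructor
      · intro hx
        by_cases hxN : x ≤ 2 ^ k'
        · exact Or.inl ((memP q x).mpr ⟨hx, hxN⟩)
        · right
          have hxI := Finset.mem_Icc.mp (ρsub q hx)
          have hiI : x - 2 ^ k' ∈ Finset.Icc 1 (2 ^ k') := Finset.mem_Icc.mpr ⟨by omega, by omega⟩
          obtain ⟨p, -, hp⟩ : ∃ p ∈ Finset.univ, x - 2 ^ k' ∈ P p := by
            rw [← Finset.mem_sup, supP]; exact hiI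
          have hxρ : x - 2 ^ k' + 2 ^ k' ∈ ρ (g p) := hg p _ hp
          have hq : g p = q := by
            by_contra hne
            have hx' : x ∈ ρ (g p) := by
              have : x - 2 ^ k' + 2 ^ k' = x := by omega
              rwa [this] at hxρ
            exact Finset.disjoint_left.mp (hdisj (g p) q hne) hx' hx
          exact ⟨x - 2 ^ k', ⟨p, hq, hp⟩, by omega⟩
      · rintro (h | ⟨i, ⟨p, hpq, hip⟩, rfl⟩)
        · exact ((memP q x).mp h).1
        · have := hg p i hip; rwa [hpq] at this
  · rintro ⟨P, g, ⟨⟨hdisj, hsup⟩, hone, hcond⟩, rfl⟩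
    have hPsub : ∀ q, P q ⊆ Finset.Icc 1 (2 ^ k') := fun q =>
      hsup ▸ Finset.le_sup (Finset.mem_univ q)
    have supD : Finset.univ.sup (dotAct P g) = Finset.Icc 1 (2 ^ k') :=
      (sup_dotAct P g).trans hsup
    have vMaxD : vMax (dotAct P g) = 2 ^ k' := vMax_eq _ _ hNpos supD
    have memρ : ∀ q x, x ∈ vUnion P (vUp (dotAct P g)) q ↔
        x ∈ P q ∨ ∃ i, (∃ p, g p = q ∧ i ∈ P p) ∧ i + 2 ^ k' = x := by
      intro q x
      simp only [vUnion, vUp, Finset.mem_union, Finset.mem_image, vMaxD, mem_dotAct]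
    refine ⟨⟨fun p q hpq => ?_, ?_⟩, fun p hp => (memρ p 1).mpr (Or.inl (hone p hp)), ?_⟩
    · rw [Finset.disjoint_left]
      intro x hxp hxq
      rw [memρ] at hxp hxq
      rcases hxp with hp1 | ⟨i, ⟨a, hap, hia⟩, hix⟩ <;>
        rcases hxq with hq1 | ⟨j, ⟨b, hbq, hjb⟩, hjx⟩
      · exact Finset.disjoint_left.mp (hdisj p q hpq) hp1 hq1
      · have h1 := Finset.mem_Icc.mp (hPsub p hp1)
        have h2 := Finset.mem_Icc.mp (hPsub b hjb)
        omega
      · have h1 := Finset.mem_Icc.mp (hPsub q hq1)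
        have h2 := Finset.mem_Icc.mp (hPsub a hia)
        omega
      · have hij : i = j := by omega
        subst hij
        have hab : a = b := by
          by_contra hne
          exact Finset.disjoint_left.mp (hdisj a b hne) hia hjb
        subst hab
        exact hpq (hap ▸ hbq ▸ rfl)
    · ext x
      simp only [Finset.mem_sup, Finset.mem_univ, true_and, memρ, Finset.mem_Icc]
      constructor
      · rintro ⟨q, hq | ⟨i, ⟨p, hpq, hip⟩, hix⟩⟩
        · have := Finset.mem_Icc.mp (hPsub q hq)
          omega
        · have := Finset.mem_Icc.mp (hPsub p hip)
          omega
      · rintro ⟨h1, h2⟩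
        by_cases hxN : x ≤ 2 ^ k'
        · obtain ⟨q, -, hq⟩ : ∃ q ∈ Finset.univ, x ∈ P q := by
            rw [← Finset.mem_sup, hsup, Finset.mem_Icc]; omega
          exact ⟨q, Or.inl hq⟩
        · obtain ⟨p, -, hp⟩ : ∃ p ∈ Finset.univ, x - 2 ^ k' ∈ P p := by
            rw [← Finset.mem_sup, hsup, Finset.mem_Icc]; omega
          exact ⟨g p, Or.inr ⟨x - 2 ^ k', ⟨p, rfl, hp⟩, by omega⟩⟩
    · rintro k'' hk'' i hi j hj ⟨α, hiα, hjα⟩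
      have hiI := Finset.mem_Icc.mp hi
      have hjI := Finset.mem_Icc.mp hj
      have hpowle : 2 ^ k'' ≤ 2 ^ k' :=
        Nat.pow_le_pow_right (by norm_num) (by omega)
      have hiP : i ∈ P α := by
        rcases (memρ α i).mp hiα with h | ⟨a, ⟨b, -, hab⟩, hax⟩
        · exact h
        · have := Finset.mem_Icc.mp (hPsub b hab); omega
      have hjP : j ∈ P α := by
        rcases (memρ α j).mp hjα with h | ⟨a, ⟨b, -, hab⟩, hax⟩
        · exact h
        · have := Finset.mem_Icc.mp (hPsub b hab); omega
      rcases Nat.lt_succ_iff_lt_or_eq.mp hk'' with h | rfl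
      · obtain ⟨β, h1, h2⟩ := hcond k'' h i hi j hj ⟨α, hiP, hjP⟩
        exact ⟨β, (memρ β _).mpr (Or.inl h1), (memρ β _).mpr (Or.inl h2)⟩
      · exact ⟨g α, (memρ (g α) _).mpr (Or.inr ⟨i, ⟨α, rfl, hiP⟩, rfl⟩),
          (memρ (g α) _).mpr (Or.inr ⟨j, ⟨α, rfl, hjP⟩, rfl⟩)⟩
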